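/- Let G be a finite simple graph and let n ≥ 2 and d ≥ 1 be integers. Then Γ_{2d+1} G admits a proper n-coloring if and only if there exists a graph homomorphism from G to Ω_{2d+1} K_n. -/

import Mathlib

/-- `HasWalkLen G d u v` means there is a walk of length exactly `d` from `u` to `v` in `G`. -/
def HasWalkLen {V : Type*} (G : SimpleGraph V) (d : ℕ) (u v : V) : Prop :=
  ∃ w : G.Walk u v, w.length = d

/-- `γ` is a proper coloring of the `d`-th power graph `Γ_d G`: any two (not necessarily
distinct) vertices joined by a walk of length exactly `d` receive different colors. -/
def IsWideColoring {V : Type*} (G : SimpleGraph V) (d : ℕ) {m : ℕ} (γ : V → Fin m) : Prop :=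
  ∀ u v : V, HasWalkLen G d u v → γ u ≠ γ v

/-- `N^{=d}(S)`: vertices reachable from `S` by a walk of length exactly `d`. -/
def NExact {V : Type*} (G : SimpleGraph V) (d : ℕ) (S : Set V) : Set V :=
  {v | ∃ s ∈ S, HasWalkLen G d s v}

/-- `N^{≤d}(S)`: vertices reachable from `S` by a walk of length at most `d`. -/
def NLe {V : Type*} (G : SimpleGraph V) (d : ℕ) (S : Set V) : Set V :=
  {v | ∃ s ∈ S, ∃ w : G.Walk s v, w.length ≤ d}

/-- The exponential graph `K_c^G`: vertices are functions `V(G) → {1,…,c}`, distinct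
functions `f, g` adjacent iff `f u ≠ g v` for every edge `uv` of `G`. -/
def expGraph {V : Type*} (c : ℕ) (G : SimpleGraph V) : SimpleGraph (V → Fin c) where
  Adj f g := f ≠ g ∧ ∀ u v : V, G.Adj u v → f u ≠ g v
  symm := by
    refine ⟨?_⟩
    rintro f g ⟨hne, h⟩
    exact ⟨hne.symm, fun u v huv he => h v u huv.symm he.symm⟩
  loopless := ⟨fun f h => h.1 rfl⟩

/-- The tensor (categorical) product `G × H`. -/
def tensorProd {V W : Type*} (G : SimpleGraph V) (H : SimpleGraph W) :
    SimpleGraph (V × W) where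
  Adj p q := G.Adj p.1 q.1 ∧ H.Adj p.2 q.2
  symm := ⟨fun p q h => ⟨h.1.symm, h.2.symm⟩⟩
  loopless := ⟨fun p h => G.irrefl h.1⟩

/-- The lexicographic product `G[H]`. -/
def lexProd {V W : Type*} (G : SimpleGraph V) (H : SimpleGraph W) :
    SimpleGraph (V × W) where
  Adj p q := G.Adj p.1 q.1 ∨ (p.1 = q.1 ∧ H.Adj p.2 q.2)
  symm := by
    refine ⟨?_⟩
    rintro p q (h | ⟨e, h⟩)
    · exact Or.inl h.symm
    · exact Or.inr ⟨e.symm, h.symm⟩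
  loopless := by
    refine ⟨?_⟩
    rintro p (h | ⟨-, h⟩)
    · exact G.irrefl h
    · exact H.irrefl h

/-- Vertices of `Ω_{2d+1} K_n`: tuples in `{0,…,d+1}^n` with exactly one coordinate equal
to `0` and at least one coordinate equal to `1`. -/
def OmegaVert (d n : ℕ) : Type :=
  {x : Fin n → Fin (d + 2) // (∃! i, x i = 0) ∧ ∃ i, x i = 1}

/-- The graph `Ω_{2d+1} K_n`: two tuples adjacent iff in every coordinate they differ by
exactly one, or are both equal to `d+1`. -/
def omegaK (d n : ℕ) : SimpleGraph (OmegaVert d n) where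
  Adj a b := ∀ i, ((a.1 i : ℕ) + 1 = (b.1 i : ℕ) ∨ (b.1 i : ℕ) + 1 = (a.1 i : ℕ))
      ∨ ((a.1 i : ℕ) = d + 1 ∧ (b.1 i : ℕ) = d + 1)
  symm := by
    refine ⟨?_⟩
    intro a b h i
    rcases h i with (h | h) | h
    · exact Or.inl (Or.inr h)
    · exact Or.inl (Or.inl h)
    · exact Or.inr ⟨h.2, h.1⟩
  loopless := by
    refine ⟨?_⟩
    intro a h
    obtain ⟨i, hi, -⟩ := a.2.1
    have hv : (a.1 i : ℕ) = 0 := by simp [hi]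
    rcases h i with (h | h) | ⟨h1, h2⟩ <;> omega

open SimpleGraph

private lemma pad_walk_aux {V : Type} {G : SimpleGraph V} {x y z : V} (h : G.Adj x z)
    (w : G.Walk x y) (m : ℕ) : ∃ w' : G.Walk x y, w'.length = w.length + 2 * m := by
  induction m with
  | zero => exact ⟨w, by omega⟩
  | succ m ih =>
    obtain ⟨w', hw'⟩ := ih
    refine ⟨Walk.cons h (Walk.cons h.symm w'), ?_⟩
    simp [hw']; omega

private lemma pad_walk {V : Type} {G : SimpleGraph V} {x y : V}
    (w : G.Walk x y) (hw : 0 < w.length) (m : ℕ) :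
    ∃ w' : G.Walk x y, w'.length = w.length + 2 * m := by
  cases w with
  | nil => simp at hw
  | cons h t => exact pad_walk_aux h (Walk.cons h t) m

private lemma no_odd_loop (d : ℕ) (a : ℕ → ℕ)
    (hstep : ∀ k < 2 * d + 1,
      (a k + 1 = a (k + 1) ∨ a (k + 1) + 1 = a k) ∨ (a k = d + 1 ∧ a (k + 1) = d + 1))
    (h0 : a 0 = 0) (hL : a (2 * d + 1) = 0) : False := by
  have h1 : ∀ k, k ≤ 2 * d + 1 → a k ≤ k := by
    intro k
    induction k with
    | zero => intro _; omega
    | succ k ih =>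
      intro hk
      have hs := hstep k (by omega)
      have := ih (by omega)
      omega
  have h2 : ∀ j, j ≤ 2 * d + 1 → a (2 * d + 1 - j) ≤ j := by
    intro j
    induction j with
    | zero => intro _; simpa using hL.le
    | succ j ih =>
      intro hj
      have hs := hstep (2 * d + 1 - (j + 1)) (by omega)
      have he : 2 * d + 1 - (j + 1) + 1 = 2 * d + 1 - j := by omega
      have := ih (by omega)
      rw [he] at hs
      omega
  have h3 : ∀ k, k ≤ 2 * d + 1 → a k % 2 = k % 2 := by
    intro k
    induction k with
    | zero => intro _; omega
    | succ k ih =>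
      intro hk
      have hs := hstep k (by omega)
      have hak := h1 k (by omega)
      have hb := h2 (2 * d + 1 - (k + 1)) (by omega)
      rw [show 2 * d + 1 - (2 * d + 1 - (k + 1)) = k + 1 by omega] at hb
      have := ih (by omega)
      omega
  have := h3 (2 * d + 1) le_rfl
  omega

/-- The set of lengths of walks from `v` to the color class of `i`, plus `d+1`. -/
private def walkSet {V : Type} (G : SimpleGraph V) (d : ℕ) {n : ℕ} (γ : V → Fin n)
    (i : Fin n) (v : V) : Set ℕ :=
  {ℓ | ∃ u, γ u = i ∧ ∃ w : G.Walk v u, w.length = ℓ} ∪ {d + 1}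

private noncomputable def fdist {V : Type} (G : SimpleGraph V) (d : ℕ) {n : ℕ}
    (γ : V → Fin n) (i : Fin n) (v : V) : ℕ :=
  sInf (walkSet G d γ i v)

private lemma fdist_le {V : Type} (G : SimpleGraph V) (d : ℕ) {n : ℕ} (γ : V → Fin n)
    (i : Fin n) (v : V) : fdist G d γ i v ≤ d + 1 :=
  Nat.sInf_le (Or.inr rfl)

private lemma fdist_mem {V : Type} (G : SimpleGraph V) (d : ℕ) {n : ℕ} (γ : V → Fin n)
    (i : Fin n) (v : V) : fdist G d γ i v ∈ walkSet G d γ i v :=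
  Nat.sInf_mem ⟨d + 1, Or.inr rfl⟩

private lemma fdist_le_of_walk {V : Type} (G : SimpleGraph V) (d : ℕ) {n : ℕ}
    (γ : V → Fin n) {i : Fin n} {v u : V} (hu : γ u = i) (w : G.Walk v u) :
    fdist G d γ i v ≤ w.length :=
  Nat.sInf_le (Or.inl ⟨u, hu, w, rfl⟩)

private lemma fdist_self {V : Type} (G : SimpleGraph V) (d : ℕ) {n : ℕ} (γ : V → Fin n)
    (v : V) : fdist G d γ (γ v) v = 0 :=
  Nat.le_zero.mp (by simpa using fdist_le_of_walk G d γ rfl (Walk.nil : G.Walk v v))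

private lemma fdist_eq_zero {V : Type} (G : SimpleGraph V) (d : ℕ) {n : ℕ} (γ : V → Fin n)
    {i : Fin n} {v : V} (h : fdist G d γ i v = 0) : γ v = i := by
  have hm := fdist_mem G d γ i v
  rw [h] at hm
  rcases hm with ⟨u, hu, w, hw⟩ | hm
  · rw [Walk.eq_of_length_eq_zero hw]; exact hu
  · exact absurd hm.symm (by omega)

private lemma fdist_adj_le {V : Type} {G : SimpleGraph V} (d : ℕ) {n : ℕ} (γ : V → Fin n)
    (i : Fin n) {x y : V} (hxy : G.Adj x y) :
    fdist G d γ i x ≤ fdist G d γ i y + 1 := by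
  rcases fdist_mem G d γ i y with ⟨u, hu, w, hw⟩ | hm
  · have := fdist_le_of_walk G d γ hu (Walk.cons hxy w)
    simpa [hw] using this
  · have h1 := fdist_le G d γ i x
    have h2 : fdist G d γ i y = d + 1 := hm
    omega

private lemma fdist_adj_ne {V : Type} {G : SimpleGraph V} {d : ℕ} {n : ℕ} {γ : V → Fin n}
    (hγ : IsWideColoring G (2 * d + 1) γ) (i : Fin n) {x y : V} (hxy : G.Adj x y)
    (hx : fdist G d γ i x ≤ d) (heq : fdist G d γ i x = fdist G d γ i y) : False := by
  rcases fdist_mem G d γ i x with ⟨u₁, hu₁, w₁, hw₁⟩ | hm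
  · rcases fdist_mem G d γ i y with ⟨u₂, hu₂, w₂, hw₂⟩ | hm'
    · set k := fdist G d γ i x with hk
      have hW : ∃ W : G.Walk u₁ u₂, W.length = 2 * k + 1 := by
        refine ⟨w₁.reverse.append (Walk.cons hxy w₂), ?_⟩
        simp [hw₁, hw₂, ← heq, ← hk]
        omega
      obtain ⟨W, hWl⟩ := hW
      obtain ⟨W', hW'⟩ := pad_walk W (by omega) (d - k)
      exact hγ u₁ u₂ ⟨W', by omega⟩ (hu₁.trans hu₂.symm)
    · have : fdist G d γ i y = d + 1 := hm'
      omega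
  · have : fdist G d γ i x = d + 1 := hm
    omega

/-- A default vertex of `Ω_{2d+1} K_n` (used for isolated vertices). -/
private def defaultOmega (d n : ℕ) (hn : 2 ≤ n) : OmegaVert d n := by
  refine ⟨fun i => if i = ⟨0, by omega⟩ then 0 else 1, ⟨⟨⟨0, by omega⟩, by simp, ?_⟩, ⟨1, by omega⟩, ?_⟩⟩
  · intro j hj
    by_contra hne
    simp only [hne, if_false] at hj
    exact absurd (congrArg Fin.val hj) (by simp)
  · have h10 : (⟨1, by omega⟩ : Fin n) ≠ ⟨0, by omega⟩ := by
      simp [Fin.ext_iff]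
    simp [h10]

/-- `Γ_{2d+1} G` admits a proper `n`-coloring iff `G` admits a graph
homomorphism to `Ω_{2d+1} K_n`. -/
theorem stmt_16 {V : Type} [Fintype V] (G : SimpleGraph V) (n d : ℕ)
    (hn : 2 ≤ n) (hd : 1 ≤ d) :
    (∃ γ : V → Fin n, IsWideColoring G (2 * d + 1) γ) ↔
      Nonempty (G →g omegaK d n) := by
  classical
  constructor
  · rintro ⟨γ, hγ⟩
    have hle : ∀ (i : Fin n) (v : V), fdist G d γ i v < d + 2 := fun i v => by
      have := fdist_le G d γ i v; omega
    have hprop : ∀ v : V, (∃ z, G.Adj v z) →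
        (∃! i, (⟨fdist G d γ i v, hle i v⟩ : Fin (d + 2)) = 0) ∧
          ∃ i, (⟨fdist G d γ i v, hle i v⟩ : Fin (d + 2)) = 1 := by
      intro v hv
      refine ⟨⟨γ v, ?_, ?_⟩, ?_⟩
      · simp [Fin.ext_iff, fdist_self G d γ v]
      · intro j hj
        have : fdist G d γ j v = 0 := by simpa [Fin.ext_iff] using hj
        exact (fdist_eq_zero G d γ this).symm
      · obtain ⟨z, hz⟩ := hv
        refine ⟨γ z, ?_⟩
        have h1 : fdist G d γ (γ z) v ≤ 1 := by
          simpa using fdist_le_of_walk G d γ rfl (Walk.cons hz Walk.nil)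
        have h0 : fdist G d γ (γ z) v ≠ 0 := by
          intro h
          have := fdist_eq_zero G d γ h
          obtain ⟨W, hW⟩ := pad_walk (Walk.cons hz Walk.nil) (by simp) d
          exact hγ v z ⟨W, by simp at hW; omega⟩ this
        simp [Fin.ext_iff]
        omega
    refine ⟨⟨fun v => if hv : ∃ z, G.Adj v z then
      id (α := OmegaVert d n) ⟨fun i => ⟨fdist G d γ i v, hle i v⟩, hprop v hv⟩ else defaultOmega d n hn, ?_⟩⟩
    intro x y hxy
    have hx : ∃ z, G.Adj x z := ⟨y, hxy⟩
    have hy : ∃ z, G.Adj y z := ⟨x, hxy.symm⟩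
    rw [dif_pos hx, dif_pos hy]
    intro i
    show ((fdist G d γ i x + 1 = fdist G d γ i y ∨ fdist G d γ i y + 1 = fdist G d γ i x)
      ∨ (fdist G d γ i x = d + 1 ∧ fdist G d γ i y = d + 1))
    have h1 := fdist_adj_le d γ i hxy
    have h2 := fdist_adj_le d γ i hxy.symm
    have h3 := fdist_le G d γ i x
    have h4 := fdist_le G d γ i y
    by_cases hne : fdist G d γ i x = fdist G d γ i y
    · right
      constructor <;> [skip; rw [← hne]] <;>
      · by_contra h
        exact fdist_adj_ne hγ i hxy (by omega) hne
    · left; omega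
  · rintro ⟨φ⟩
    refine ⟨fun v => ((φ v).2.1).choose, ?_⟩
    rintro u v ⟨w, hw⟩ heq
    set i := ((φ u).2.1).choose with hi
    have hu0 : (φ u).1 i = 0 := ((φ u).2.1).choose_spec.1
    have heq' : i = ((φ v).2.1).choose := heq
    have hv0 : (φ v).1 i = 0 := by rw [heq']; exact ((φ v).2.1).choose_spec.1
    refine no_odd_loop d (fun k => ((φ (w.getVert k)).1 i : ℕ)) ?_ ?_ ?_
    · intro k hk
      have hadj : G.Adj (w.getVert k) (w.getVert (k + 1)) :=
        w.adj_getVert_succ (by omega)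
      exact φ.map_adj hadj i
    · simp [hu0]
    · show ((φ (w.getVert (2 * d + 1))).1 i : ℕ) = 0
      rw [← hw, Walk.getVert_length, hv0]
      simp
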